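/- Let μ be a probability measure on a set D and let A = {x ∈ D : argmax f(x) ≠ argmax h(x)} have measure ≤ ε. Suppose for every x ∉ A with i = argmax h(x) we have hᵢ(x) > hⱼ(x) + ε for j ≠ i, and ‖f'(x) - h(x)‖_∞ < ε/2 for all x. Then μ{x : argmax f(x) ≠ argmax f'(x)} ≤ ε. -/
import Mathlib

open MeasureTheory

/-- Clean-data accuracy preservation: if the strict argmaxes of `f` and `h` disagree on a set of
measure at most `ε`, `h` has an `ε`-margin wherever they agree, and `f'` is within `ε/2` of `h`
in sup norm, then the strict argmaxes of `f` and `f'` disagree with probability at most `ε`. -/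
theorem stmt3 {D : Type*} [MeasurableSpace D] (μ : Measure D) [IsProbabilityMeasure μ]
    {n : ℕ} (f h f' : D → Fin n → ℝ) (ε : ℝ) (hε : 0 < ε)
    (af ah af' : D → Fin n)
    (haf : ∀ x, ∀ j ≠ af x, f x (af x) > f x j)
    (hah : ∀ x, ∀ j ≠ ah x, h x (ah x) > h x j)
    (haf' : ∀ x, ∀ j ≠ af' x, f' x (af' x) > f' x j)
    (hA : μ {x | af x ≠ ah x} ≤ ENNReal.ofReal ε)
    (hmargin : ∀ x, af x = ah x → ∀ j ≠ ah x, h x (ah x) > h x j + ε)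
    (happrox : ∀ x, ‖f' x - h x‖ < ε / 2) :
    μ {x | af x ≠ af' x} ≤ ENNReal.ofReal ε := by
  refine le_trans (measure_mono ?_) hA
  intro x hx
  simp only [Set.mem_setOf_eq] at *
  intro hfh
  apply hx
  rw [hfh]
  by_contra hne
  have h1 : f' x (af' x) > f' x (ah x) := haf' x (ah x) hne
  have h2 : h x (ah x) > h x (af' x) + ε := hmargin x hfh (af' x) (Ne.symm hne)
  have b1 : |f' x (af' x) - h x (af' x)| ≤ ‖f' x - h x‖ := by
    have := norm_le_pi_norm (f' x - h x) (af' x)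
    simpa using this
  have b2 : |f' x (ah x) - h x (ah x)| ≤ ‖f' x - h x‖ := by
    have := norm_le_pi_norm (f' x - h x) (ah x)
    simpa using this
  have hb := happrox x
  have := abs_le.mp b1
  have := abs_le.mp b2
  linarith [this.1, this.2, (abs_le.mp b1).1, (abs_le.mp b1).2]
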